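/- arXiv:2211.06550 — 4 statements merged into one kernel-verified Lean document; each statement's English description precedes it below -/
import Mathlib

section
/- Let O be a measurable space, let μ and ν be probability measures on O, and let ε ≥ 0 and δ ≥ 0 be real numbers. Suppose that for every measurable set S ⊆ O we have μ(S) ≤ e^ε · ν(S) + δ. Then for every measurable function f : O → ℝ with 0 ≤ f ≤ 1, we have ∫ f dμ ≤ e^ε · ∫ f dν + δ. -/
open MeasureTheory

/-- If the pair of probability measures (μ, ν) satisfies the (ε,δ)-DP inequality
μ(S) ≤ e^ε · ν(S) + δ for every measurable set S, then for every measurable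
attacker f : O → [0,1] we have ∫ f dμ ≤ e^ε · ∫ f dν + δ. -/
theorem dp_integral_bound {O : Type*} [MeasurableSpace O]
    (μ ν : Measure O) [IsProbabilityMeasure μ] [IsProbabilityMeasure ν]
    (ε δ : ℝ) (hε : 0 ≤ ε) (hδ : 0 ≤ δ)
    (hDP : ∀ S : Set O, MeasurableSet S →
      (μ S).toReal ≤ Real.exp ε * (ν S).toReal + δ)
    (f : O → ℝ) (hf : Measurable f) (hf0 : ∀ o, 0 ≤ f o) (hf1 : ∀ o, f o ≤ 1) :
    ∫ o, f o ∂μ ≤ Real.exp ε * ∫ o, f o ∂ν + δ := by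
  -- integrability of f against any probability measure
  have hint : ∀ (m : Measure O) [IsProbabilityMeasure m], Integrable f m := by
    intro m _
    refine Integrable.mono' (integrable_const (1 : ℝ)) hf.aestronglyMeasurable ?_
    exact Filter.Eventually.of_forall fun o => abs_le.mpr ⟨by linarith [hf0 o], hf1 o⟩
  -- layer cake for both measures
  have hlc : ∀ (m : Measure O) [IsProbabilityMeasure m],
      ∫ o, f o ∂m = ∫ t in Set.Ioc (0:ℝ) 1, (m {a | t ≤ f a}).toReal := by
    intro m _
    exact (hint m).integral_eq_integral_Ioc_meas_le
      (Filter.Eventually.of_forall hf0) (Filter.Eventually.of_forall hf1)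
  rw [hlc μ, hlc ν]
  -- measurability and integrability of the tail functions
  have hmeas : ∀ (m : Measure O), Measurable fun t : ℝ => (m {a | t ≤ f a}).toReal := by
    intro m
    refine Measurable.ennreal_toReal ?_
    exact Antitone.measurable fun s t hst => measure_mono fun a ha => hst.trans ha
  have htint : ∀ (m : Measure O) [IsProbabilityMeasure m],
      IntegrableOn (fun t : ℝ => (m {a | t ≤ f a}).toReal) (Set.Ioc 0 1) := by
    intro m _
    refine Integrable.mono' (integrable_const (1 : ℝ))
      (hmeas m).aestronglyMeasurable ?_
    refine Filter.Eventually.of_forall fun t => ?_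
    rw [Real.norm_eq_abs, abs_of_nonneg ENNReal.toReal_nonneg]
    exact ENNReal.toReal_le_of_le_ofReal zero_le_one (by simpa using prob_le_one)
  have hvol : (MeasureTheory.volume (Set.Ioc (0:ℝ) 1)).toReal = 1 := by simp
  calc ∫ t in Set.Ioc (0:ℝ) 1, (μ {a | t ≤ f a}).toReal
      ≤ ∫ t in Set.Ioc (0:ℝ) 1,
          (Real.exp ε * (ν {a | t ≤ f a}).toReal + δ) := by
        refine setIntegral_mono_on (htint μ) ?_ measurableSet_Ioc fun t _ => ?_
        · exact ((htint ν).const_mul _).add (integrable_const δ)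
        · exact hDP _ (measurableSet_le measurable_const hf)
    _ = Real.exp ε * (∫ t in Set.Ioc (0:ℝ) 1, (ν {a | t ≤ f a}).toReal) + δ := by
        rw [integral_add ((htint ν).const_mul _) (integrable_const δ),
          MeasureTheory.integral_const_mul, setIntegral_const, smul_eq_mul, measureReal_def, hvol,
          one_mul]
end

section
/- Let O be a measurable space, let μ and ν be probability measures on O, and let ε ≥ 0 and δ ≥ 0. Suppose that for every measurable set S ⊆ O we have μ(S) ≤ e^ε · ν(S) + δ. Then for every measurable function f : O → ℝ with 0 ≤ f ≤ 1, setting TP = ∫ f dμ and FP = ∫ f dν, we have TP − δ ≤ e^ε · FP. -/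
open MeasureTheory

/-- If (μ, ν) satisfies the (ε,δ)-DP inequality μ(S) ≤ e^ε · ν(S) + δ for all
measurable S, then for every measurable attacker f : O → [0,1], with
TP = ∫ f dμ and FP = ∫ f dν, we have TP − δ ≤ e^ε · FP. -/
theorem dp_tp_fp_bound {O : Type*} [MeasurableSpace O]
    (μ ν : Measure O) [IsProbabilityMeasure μ] [IsProbabilityMeasure ν]
    (ε δ : ℝ) (hε : 0 ≤ ε) (hδ : 0 ≤ δ)
    (hDP : ∀ S : Set O, MeasurableSet S →
      (μ S).toReal ≤ Real.exp ε * (ν S).toReal + δ)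
    (f : O → ℝ) (hf : Measurable f) (hf0 : ∀ o, 0 ≤ f o) (hf1 : ∀ o, f o ≤ 1) :
    (∫ o, f o ∂μ) - δ ≤ Real.exp ε * ∫ o, f o ∂ν := by
  have hbd : ∀ o, ‖f o‖ ≤ 1 := fun o => by
    rw [Real.norm_eq_abs, abs_le]; exact ⟨by linarith [hf0 o], hf1 o⟩
  have hintμ : Integrable f μ :=
    (integrable_const (1 : ℝ)).mono' hf.aestronglyMeasurable
      (Filter.Eventually.of_forall hbd)
  have hintν : Integrable f ν :=
    (integrable_const (1 : ℝ)).mono' hf.aestronglyMeasurable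
      (Filter.Eventually.of_forall hbd)
  have hμeq := hintμ.integral_eq_integral_Ioc_meas_le (M := 1)
    (Filter.Eventually.of_forall hf0) (Filter.Eventually.of_forall hf1)
  have hνeq := hintν.integral_eq_integral_Ioc_meas_le (M := 1)
    (Filter.Eventually.of_forall hf0) (Filter.Eventually.of_forall hf1)
  rw [hμeq, hνeq]
  simp only [measureReal_def]
  have hSm : ∀ t : ℝ, MeasurableSet {a : O | t ≤ f a} := fun t =>
    hf measurableSet_Ici
  -- measurability / integrability of the tail functions
  have hmbleμ : Measurable fun t : ℝ => (μ {a : O | t ≤ f a}).toReal :=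
    Measurable.ennreal_toReal <| Antitone.measurable
      (fun _ _ hst => measure_mono (fun _ h => le_trans hst h))
  have hmbleν : Measurable fun t : ℝ => (ν {a : O | t ≤ f a}).toReal :=
    Measurable.ennreal_toReal <| Antitone.measurable
      (fun _ _ hst => measure_mono (fun _ h => le_trans hst h))
  have hIμ : IntegrableOn (fun t : ℝ => (μ {a : O | t ≤ f a}).toReal)
      (Set.Ioc 0 1) volume := by
    apply Measure.integrableOn_of_bounded (M := 1) measure_Ioc_lt_top.ne
      hmbleμ.aestronglyMeasurable
    refine Filter.Eventually.of_forall fun t => ?_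
    rw [Real.norm_eq_abs, abs_of_nonneg ENNReal.toReal_nonneg]
    have : μ {a : O | t ≤ f a} ≤ 1 := prob_le_one
    simpa using ENNReal.toReal_le_of_le_ofReal zero_le_one (by simpa using this)
  have hIν : IntegrableOn (fun t : ℝ => (ν {a : O | t ≤ f a}).toReal)
      (Set.Ioc 0 1) volume := by
    apply Measure.integrableOn_of_bounded (M := 1) measure_Ioc_lt_top.ne
      hmbleν.aestronglyMeasurable
    refine Filter.Eventually.of_forall fun t => ?_
    rw [Real.norm_eq_abs, abs_of_nonneg ENNReal.toReal_nonneg]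
    have : ν {a : O | t ≤ f a} ≤ 1 := prob_le_one
    simpa using ENNReal.toReal_le_of_le_ofReal zero_le_one (by simpa using this)
  have key : ∫ t in Set.Ioc (0:ℝ) 1, (μ {a : O | t ≤ f a}).toReal
      ≤ ∫ t in Set.Ioc (0:ℝ) 1, (Real.exp ε * (ν {a : O | t ≤ f a}).toReal + δ) := by
    apply setIntegral_mono_on hIμ _ measurableSet_Ioc
    · intro t _
      exact hDP _ (hSm t)
    · exact (hIν.const_mul _).add (integrableOn_const measure_Ioc_lt_top.ne)
  have hrhs : ∫ t in Set.Ioc (0:ℝ) 1, (Real.exp ε * (ν {a : O | t ≤ f a}).toReal + δ)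
      = Real.exp ε * (∫ t in Set.Ioc (0:ℝ) 1, (ν {a : O | t ≤ f a}).toReal) + δ := by
    rw [integral_add (hIν.const_mul _) (integrableOn_const measure_Ioc_lt_top.ne),
      integral_const_mul, setIntegral_const]
    simp [Real.volume_Ioc]
  linarith [key, hrhs.symm.le]
end

section
/- Let O be a measurable space, let μ and ν be probability measures on O, and let ε ≥ 0 and δ ≥ 0. Suppose that for every measurable set S ⊆ O we have ν(S) ≤ e^ε · μ(S) + δ. Then for every measurable function f : O → ℝ with 0 ≤ f ≤ 1, setting TP = ∫ f dμ and FP = ∫ f dν, we have 1 − FP − δ ≤ e^ε · (1 − TP). -/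
open MeasureTheory

/-- If (ν, μ) satisfies the (ε,δ)-DP inequality ν(S) ≤ e^ε · μ(S) + δ for all
measurable S, then for every measurable attacker f : O → [0,1], with
TP = ∫ f dμ and FP = ∫ f dν, we have 1 − FP − δ ≤ e^ε · (1 − TP). -/
theorem dp_tn_fn_bound {O : Type*} [MeasurableSpace O]
    (μ ν : Measure O) [IsProbabilityMeasure μ] [IsProbabilityMeasure ν]
    (ε δ : ℝ) (hε : 0 ≤ ε) (hδ : 0 ≤ δ)
    (hDP : ∀ S : Set O, MeasurableSet S →
      (ν S).toReal ≤ Real.exp ε * (μ S).toReal + δ)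
    (f : O → ℝ) (hf : Measurable f) (hf0 : ∀ o, 0 ≤ f o) (hf1 : ∀ o, f o ≤ 1) :
    1 - (∫ o, f o ∂ν) - δ ≤ Real.exp ε * (1 - ∫ o, f o ∂μ) := by
  set g : O → ℝ := fun o => 1 - f o with hg
  have hgm : Measurable g := measurable_const.sub hf
  have hg0 : ∀ o, 0 ≤ g o := fun o => by simp [hg, hf1 o]
  have hg1 : ∀ o, g o ≤ 1 := fun o => by simp [hg, hf0 o]
  have hint : ∀ (ρ : Measure O) [IsProbabilityMeasure ρ], Integrable g ρ := by
    intro ρ _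
    refine (integrable_const (1 : ℝ)).mono' hgm.aestronglyMeasurable ?_
    exact Filter.Eventually.of_forall fun o => by
      rw [Real.norm_eq_abs, abs_of_nonneg (hg0 o)]; exact hg1 o
  have key : ∀ (ρ : Measure O) [IsProbabilityMeasure ρ],
      ∫ o, g o ∂ρ = ∫ t in Set.Ioc (0:ℝ) 1, (ρ {a | t ≤ g a}).toReal := by
    intro ρ _
    exact (hint ρ).integral_eq_integral_Ioc_meas_le
      (Filter.Eventually.of_forall hg0) (Filter.Eventually.of_forall hg1)
  have hsub : ∀ (ρ : Measure O) [IsProbabilityMeasure ρ],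
      ∫ o, g o ∂ρ = 1 - ∫ o, f o ∂ρ := by
    intro ρ _
    rw [hg, integral_sub (integrable_const 1)]
    · simp
    · refine (integrable_const (1 : ℝ)).mono' hf.aestronglyMeasurable ?_
      exact Filter.Eventually.of_forall fun o => by
        rw [Real.norm_eq_abs, abs_of_nonneg (hf0 o)]; exact hf1 o
  -- measurability / integrability of layer functions
  have hmeas : ∀ (ρ : Measure O),
      Measurable (fun t : ℝ => (ρ {a | t ≤ g a}).toReal) := by
    intro ρ
    refine Measurable.ennreal_toReal ?_
    exact Antitone.measurable fun s t hst =>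
      measure_mono fun a ha => le_trans hst ha
  have hintl : ∀ (ρ : Measure O) [IsProbabilityMeasure ρ],
      IntegrableOn (fun t : ℝ => (ρ {a | t ≤ g a}).toReal) (Set.Ioc 0 1) := by
    intro ρ _
    refine (integrableOn_const (C := (1:ℝ))
        (measure_Ioc_lt_top : volume (Set.Ioc (0:ℝ) 1) < ⊤).ne).mono' ((hmeas ρ).aestronglyMeasurable) ?_
    · refine Filter.Eventually.of_forall fun t => ?_
      rw [Real.norm_eq_abs, abs_of_nonneg ENNReal.toReal_nonneg]
      exact ENNReal.toReal_le_of_le_ofReal zero_le_one (by simpa using prob_le_one)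
  have hmono : ∫ t in Set.Ioc (0:ℝ) 1, (ν {a | t ≤ g a}).toReal
      ≤ ∫ t in Set.Ioc (0:ℝ) 1,
        (Real.exp ε * (μ {a | t ≤ g a}).toReal + δ) := by
    refine setIntegral_mono_on (hintl ν) ?_ measurableSet_Ioc ?_
    · exact (((hintl μ).const_mul _).add (integrableOn_const measure_Ioc_lt_top.ne))
    · intro t _
      exact hDP _ (hgm measurableSet_Ici)
  have hrhs : ∫ t in Set.Ioc (0:ℝ) 1,
      (Real.exp ε * (μ {a | t ≤ g a}).toReal + δ)
      = Real.exp ε * (∫ t in Set.Ioc (0:ℝ) 1, (μ {a | t ≤ g a}).toReal) + δ := by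
    rw [integral_add ((hintl μ).const_mul _)
        (integrableOn_const measure_Ioc_lt_top.ne),
      integral_const_mul, setIntegral_const]
    simp [Real.volume_Ioc]
  have := hmono
  rw [← key ν, hrhs, ← key μ] at this
  rw [hsub ν, hsub μ] at this
  linarith
end

section
/- (Adversarial bound for differentially private mechanisms.) Let O be a measurable space, let μ and ν be probability measures on O, and let ε ≥ 0 and δ ≥ 0. Suppose that for every measurable set S ⊆ O both μ(S) ≤ e^ε · ν(S) + δ and ν(S) ≤ e^ε · μ(S) + δ hold. Then for every measurable function f : O → ℝ with 0 ≤ f ≤ 1, setting TP = ∫ f dμ and FP = ∫ f dν, if FP > 0 and TP < 1 then e^ε ≥ max( (TP − δ)/FP , (1 − FP − δ)/(1 − TP) ). -/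
open MeasureTheory Set

lemma key_bound {O : Type*} [MeasurableSpace O]
    (μ ν : Measure O) [IsProbabilityMeasure μ] [IsProbabilityMeasure ν]
    {c δ : ℝ} (hc : 0 ≤ c)
    (h : ∀ S : Set O, MeasurableSet S → (μ S).toReal ≤ c * (ν S).toReal + δ)
    (f : O → ℝ) (hf : Measurable f) (hf0 : ∀ o, 0 ≤ f o) (hf1 : ∀ o, f o ≤ 1) :
    ∫ o, f o ∂μ ≤ c * ∫ o, f o ∂ν + δ := by
  have hint : ∀ (ρ : Measure O) [IsProbabilityMeasure ρ], Integrable f ρ := by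
    intro ρ _
    refine (integrable_const (1:ℝ)).mono' hf.aestronglyMeasurable ?_
    exact Filter.Eventually.of_forall fun o => by
      rw [Real.norm_eq_abs, abs_of_nonneg (hf0 o)]; exact hf1 o
  have hmeas : ∀ (ρ : Measure O), Measurable fun t : ℝ => (ρ {a | t ≤ f a}).toReal := by
    intro ρ
    refine Measurable.ennreal_toReal ?_
    exact Antitone.measurable (fun s t hst => measure_mono (fun a ha => hst.trans ha))
  have hintg : ∀ (ρ : Measure O) [IsProbabilityMeasure ρ],
      IntegrableOn (fun t : ℝ => (ρ {a | t ≤ f a}).toReal) (Ioc 0 1) := by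
    intro ρ _
    refine ((integrableOn_const_iff (C := (1:ℝ))).mpr (Or.inr measure_Ioc_lt_top)).mono'
      ((hmeas ρ).aestronglyMeasurable) ?_
    refine Filter.Eventually.of_forall fun t => ?_
    rw [Real.norm_eq_abs, abs_of_nonneg ENNReal.toReal_nonneg]
    exact ENNReal.toReal_le_of_le_ofReal zero_le_one (by simp [prob_le_one])
  have lcμ : ∫ o, f o ∂μ = ∫ t in Ioc (0:ℝ) 1, (μ {a | t ≤ f a}).toReal :=
    (hint μ).integral_eq_integral_Ioc_meas_le (Filter.Eventually.of_forall hf0)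
      (Filter.Eventually.of_forall hf1)
  have lcν : ∫ o, f o ∂ν = ∫ t in Ioc (0:ℝ) 1, (ν {a | t ≤ f a}).toReal :=
    (hint ν).integral_eq_integral_Ioc_meas_le (Filter.Eventually.of_forall hf0)
      (Filter.Eventually.of_forall hf1)
  rw [lcμ, lcν]
  have step : ∫ t in Ioc (0:ℝ) 1, (μ {a | t ≤ f a}).toReal
      ≤ ∫ t in Ioc (0:ℝ) 1, (c * (ν {a | t ≤ f a}).toReal + δ) := by
    refine setIntegral_mono_on (hintg μ) ?_ measurableSet_Ioc ?_
    · exact ((hintg ν).const_mul c).add ((integrableOn_const_iff (C := δ)).mpr (Or.inr measure_Ioc_lt_top))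
    · intro t _
      exact h _ (hf measurableSet_Ici)
  refine step.trans ?_
  rw [integral_add ((hintg ν).const_mul c) ((integrableOn_const_iff (C := δ)).mpr (Or.inr measure_Ioc_lt_top)),
    integral_const_mul, setIntegral_const]
  simp [Real.volume_Ioc]

/-- Adversarial bound for differentially private mechanisms (Kairouz et al.):
if both μ(S) ≤ e^ε·ν(S) + δ and ν(S) ≤ e^ε·μ(S) + δ hold for all measurable S,
then for every measurable attacker f : O → [0,1] with TP = ∫ f dμ, FP = ∫ f dν,
FP > 0 and TP < 1, we have e^ε ≥ max((TP − δ)/FP, (1 − FP − δ)/(1 − TP)). -/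
theorem dp_adversarial_bound {O : Type*} [MeasurableSpace O]
    (μ ν : Measure O) [IsProbabilityMeasure μ] [IsProbabilityMeasure ν]
    (ε δ : ℝ) (hε : 0 ≤ ε) (hδ : 0 ≤ δ)
    (hDP₁ : ∀ S : Set O, MeasurableSet S →
      (μ S).toReal ≤ Real.exp ε * (ν S).toReal + δ)
    (hDP₂ : ∀ S : Set O, MeasurableSet S →
      (ν S).toReal ≤ Real.exp ε * (μ S).toReal + δ)
    (f : O → ℝ) (hf : Measurable f) (hf0 : ∀ o, 0 ≤ f o) (hf1 : ∀ o, f o ≤ 1)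
    (hFP : 0 < ∫ o, f o ∂ν) (hTP : ∫ o, f o ∂μ < 1) :
    max (((∫ o, f o ∂μ) - δ) / (∫ o, f o ∂ν))
        ((1 - (∫ o, f o ∂ν) - δ) / (1 - ∫ o, f o ∂μ)) ≤ Real.exp ε := by
  have hc : (0:ℝ) ≤ Real.exp ε := (Real.exp_pos ε).le
  have h1 : ∫ o, f o ∂μ ≤ Real.exp ε * ∫ o, f o ∂ν + δ :=
    key_bound μ ν hc hDP₁ f hf hf0 hf1
  have h2 : ∫ o, (1 - f o) ∂ν ≤ Real.exp ε * ∫ o, (1 - f o) ∂μ + δ := by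
    refine key_bound ν μ hc hDP₂ (fun o => 1 - f o) (measurable_const.sub hf)
      (fun o => sub_nonneg.mpr (hf1 o)) (fun o => by simpa using hf0 o)
  have hintμ : Integrable f μ := by
    refine (integrable_const (1:ℝ)).mono' hf.aestronglyMeasurable ?_
    exact Filter.Eventually.of_forall fun o => by
      rw [Real.norm_eq_abs, abs_of_nonneg (hf0 o)]; exact hf1 o
  have hintν : Integrable f ν := by
    refine (integrable_const (1:ℝ)).mono' hf.aestronglyMeasurable ?_
    exact Filter.Eventually.of_forall fun o => by
      rw [Real.norm_eq_abs, abs_of_nonneg (hf0 o)]; exact hf1 o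
  rw [integral_sub (integrable_const 1) hintν, integral_sub (integrable_const 1) hintμ,
    integral_const, integral_const] at h2
  simp only [measure_univ, probReal_univ, mul_one, ENNReal.toReal_one, smul_eq_mul, one_mul] at h2
  refine max_le ?_ ?_
  · rw [div_le_iff₀ hFP]; linarith
  · rw [div_le_iff₀ (by linarith)]; linarith
end
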